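/- Let n ≥ 1 and let {D_l}_{l∈ι} be a finite nonempty family of real n×m_l matrices with every column of every D_l summing to zero. Let λ > 0 satisfy: for every l ∈ ι and every δ ∈ ℝⁿ with Σ_i δ_i = 0, δᵀ(D_l D_lᵀ)δ ≥ λ·‖δ‖₂². Set m̲ = min_l m_l and m̄ = max_l m_l. Let Ω be a predefined-time consensus function with data (Ω̂, β, d), let T_c > 0, and for each l let the gains κ^{(l)}_e (one per column e of D_l) satisfy κ^{(l)}_e ≥ β(m̲)^d/(λ·β(m̄)²·T_c). Define F_l : ℝ^{m_l} → ℝ^{m_l} by F_l(v)_e = κ^{(l)}_e·Ω(|v_e|)/v_e if v_e ≠ 0 and F_l(v)_e = 0 if v_e = 0. Let σ : [t₀,∞) → ι be arbitrary and let x : [t₀,∞) → ℝⁿ be differentiable with ẋ(t) = −D_{σ(t)}·F_{σ(t)}(D_{σ(t)}ᵀ x(t)) for all t ≥ t₀. Then for all t ≥ t₀ + T_c and all i, x_i(t) = (1/n)·Σ_{j=1}^n x_j(t₀); i.e. consensus on the average of the initial conditions is reached within the predefined time T_c. -/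

import Mathlib

open Matrix MeasureTheory

/-- A predefined-time consensus function Ω with data (Ω̂, β, d): Ω is monotonically
increasing and nonnegative on [0,∞); Ω̂ is monotonically increasing on [0,∞), positive on
(0,∞) and Ω̂(z)/z is continuous on (0,∞); β is nonincreasing and positive; d ≥ 1;
Ω̂(β(n)‖x‖₂) ≤ β(n)^d Σᵢ Ω(xᵢ) for all n ≥ 1 and nonnegative x ∈ ℝⁿ; and
∫₀^∞ z/Ω̂(z) dz = 1. -/
def IsPredefinedTimeConsensusFunction (Ω Ωhat : ℝ → ℝ) (β : ℕ → ℝ) (d : ℝ) : Prop :=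
  Monotone Ω ∧ (∀ z : ℝ, 0 ≤ z → 0 ≤ Ω z) ∧
  MonotoneOn Ωhat (Set.Ici 0) ∧ (∀ z : ℝ, 0 < z → 0 < Ωhat z) ∧
  ContinuousOn (fun z => Ωhat z / z) (Set.Ioi 0) ∧
  Antitone β ∧ (∀ n : ℕ, 0 < β n) ∧ 1 ≤ d ∧
  (∀ n : ℕ, 1 ≤ n → ∀ x : Fin n → ℝ, (∀ i, 0 ≤ x i) →
    Ωhat (β n * Real.sqrt (∑ i, x i ^ 2)) ≤ β n ^ d * ∑ i, Ω (x i)) ∧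
  (∫ z in Set.Ioi (0:ℝ), z / Ωhat z) = 1

private lemma stmt13_antitoneOn {f f' : ℝ → ℝ} {a b : ℝ}
    (hf : ∀ t ∈ Set.Icc a b, HasDerivAt f (f' t) t)
    (h0 : ∀ t ∈ Set.Ioo a b, f' t ≤ 0) : AntitoneOn f (Set.Icc a b) := by
  apply antitoneOn_of_deriv_nonpos (convex_Icc a b)
  · exact fun t ht => (hf t ht).continuousAt.continuousWithinAt
  · intro t ht
    rw [interior_Icc] at ht
    exact (hf t (Set.Ioo_subset_Icc_self ht)).differentiableAt.differentiableWithinAt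
  · intro t ht
    rw [interior_Icc] at ht
    rw [(hf t (Set.Ioo_subset_Icc_self ht)).deriv]
    exact h0 t ht

private lemma stmt13_caseA (t₀ Tc lam bh : ℝ) (V P Ωhat : ℝ → ℝ)
    (hTc : 0 < Tc) (hlam : 0 < lam) (hbh : 0 < bh)
    (hhatpos : ∀ z : ℝ, 0 < z → 0 < Ωhat z)
    (hhatcont : ContinuousOn (fun z => Ωhat z / z) (Set.Ioi 0))
    (hint : (∫ z in Set.Ioi (0:ℝ), z / Ωhat z) = 1)
    (hVnn : ∀ u, 0 ≤ V u)
    (hVd : ∀ u, u ∈ Set.Icc t₀ (t₀ + Tc) → HasDerivAt V (-2 * P u) u)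
    (hVanti : AntitoneOn V (Set.Icc t₀ (t₀ + Tc)))
    (hkey : ∀ u ∈ Set.Icc t₀ (t₀ + Tc), 0 < V u →
      -2 * P u ≤ -(2 * (1 / (lam * bh ^ 2 * Tc)) * Ωhat (bh * Real.sqrt (lam * V u)))) :
    V (t₀ + Tc) = 0 := by
  by_contra hne
  have hVTpos : 0 < V (t₀ + Tc) := lt_of_le_of_ne (hVnn _) (Ne.symm hne)
  have hTle : t₀ ≤ t₀ + Tc := by linarith
  have hVpos : ∀ u ∈ Set.Icc t₀ (t₀ + Tc), 0 < V u := by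
    intro u hu
    exact lt_of_lt_of_le hVTpos (hVanti hu (Set.right_mem_Icc.mpr hTle) hu.2)
  -- integrability and continuity of z / Ωhat z
  set g : ℝ → ℝ := fun z => z / Ωhat z with hg_def
  have hgint : IntegrableOn g (Set.Ioi (0:ℝ)) := by
    by_contra h
    rw [MeasureTheory.integral_undef h] at hint
    norm_num at hint
  have hhatconton : ContinuousOn Ωhat (Set.Ioi (0:ℝ)) := by
    have h1 : ContinuousOn (fun z : ℝ => z * (Ωhat z / z)) (Set.Ioi 0) :=
      (continuousOn_id).mul hhatcont
    apply h1.congr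
    intro z hz
    simp only []
    rw [mul_div_assoc', mul_comm]
    exact (mul_div_cancel_right₀ (Ωhat z) (ne_of_gt (Set.mem_Ioi.mp hz))).symm
  have hgcont : ContinuousOn g (Set.Ioi (0:ℝ)) :=
    (continuousOn_id).div hhatconton (fun z hz => (hhatpos z hz).ne')
  have hgpos : ∀ z : ℝ, 0 < z → 0 < g z := fun z hz => div_pos hz (hhatpos z hz)
  set Φ : ℝ → ℝ := fun Z => ∫ z in (0:ℝ)..Z, g z with hΦ_def
  have hΦd : ∀ Z : ℝ, 0 < Z → HasDerivAt Φ (g Z) Z := by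
    intro Z hZ
    have hsub : Set.uIoc (0:ℝ) Z ⊆ Set.Ioi 0 := by
      rw [Set.uIoc_of_le hZ.le]; exact Set.Ioc_subset_Ioi_self
    have h1 : IntervalIntegrable g volume 0 Z := intervalIntegrable_iff.mpr (hgint.mono_set hsub)
    have h2 : StronglyMeasurableAtFilter g (nhds Z) volume :=
      ⟨Set.Ioi 0, Ioi_mem_nhds hZ, hgcont.aestronglyMeasurable measurableSet_Ioi⟩
    have h3 : ContinuousAt g Z := hgcont.continuousAt (Ioi_mem_nhds hZ)
    exact intervalIntegral.integral_hasDerivAt_right h1 h2 h3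
  have hΦnn : ∀ Z : ℝ, 0 ≤ Z → 0 ≤ Φ Z := by
    intro Z hZ
    apply intervalIntegral.integral_nonneg hZ
    intro z hz
    rcases eq_or_lt_of_le hz.1 with h | h
    · rw [hg_def]
      simp [← h]
    · exact (hgpos z h).le
  have hΦlt1 : ∀ Z : ℝ, 0 ≤ Z → Φ Z < 1 := by
    intro Z hZ
    rw [hΦ_def]
    simp only []
    rw [intervalIntegral.integral_of_le hZ]
    have hsplit : (∫ z in Set.Ioi (0:ℝ), g z)
        = (∫ z in Set.Ioc 0 Z, g z) + (∫ z in Set.Ioi Z, g z) := by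
      rw [← MeasureTheory.setIntegral_union (Set.Ioc_disjoint_Ioi le_rfl) measurableSet_Ioi
        (hgint.mono_set Set.Ioc_subset_Ioi_self) (hgint.mono_set (Set.Ioi_subset_Ioi hZ)),
        Set.Ioc_union_Ioi_eq_Ioi hZ]
    have hpos2 : 0 < ∫ z in Set.Ioi Z, g z := by
      have hgi : IntegrableOn g (Set.Ioi Z) := hgint.mono_set (Set.Ioi_subset_Ioi hZ)
      rw [MeasureTheory.setIntegral_pos_iff_support_of_nonneg_ae]
      · have hsub : Set.Ioi Z ⊆ Function.support g ∩ Set.Ioi Z := by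
          intro z hz
          exact ⟨(hgpos z (lt_of_le_of_lt hZ hz)).ne', hz⟩
        calc (0:ENNReal) < volume (Set.Ioi Z) := by simp [Real.volume_Ioi]
          _ ≤ volume (Function.support g ∩ Set.Ioi Z) := measure_mono hsub
      · rw [Filter.EventuallyLE, ae_restrict_iff' measurableSet_Ioi]
        exact Filter.Eventually.of_forall (fun z hz => (hgpos z (lt_of_le_of_lt hZ hz)).le)
      · exact hgi
    have hint2 : (∫ z in Set.Ioi (0:ℝ), g z) = 1 := hint
    linarith [hsplit ▸ hint2]
  -- the potential
  set Z : ℝ → ℝ := fun u => bh * Real.sqrt (lam * V u) with hZ_def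
  have hZpos : ∀ u ∈ Set.Icc t₀ (t₀ + Tc), 0 < Z u := by
    intro u hu
    exact mul_pos hbh (Real.sqrt_pos.mpr (mul_pos hlam (hVpos u hu)))
  set H : ℝ → ℝ := fun u => Tc * Φ (Z u) + u with hH_def
  have hHd : ∀ u ∈ Set.Icc t₀ (t₀ + Tc), HasDerivAt H
      (Tc * (g (Z u) * (bh * (1 / (2 * Real.sqrt (lam * V u))
        * (lam * (-2 * P u))))) + 1) u := by
    intro u hu
    have hVu : 0 < V u := hVpos u hu
    have h1 : HasDerivAt (fun r => Real.sqrt (lam * V r))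
        (1 / (2 * Real.sqrt (lam * V u)) * (lam * (-2 * P u))) u :=
      (Real.hasDerivAt_sqrt (ne_of_gt (mul_pos hlam hVu))).comp u
        ((hVd u hu).const_mul lam)
    have h2 : HasDerivAt Z (bh * (1 / (2 * Real.sqrt (lam * V u))
        * (lam * (-2 * P u)))) u := h1.const_mul bh
    have h3 : HasDerivAt (fun r => Φ (Z r))
        (g (Z u) * (bh * (1 / (2 * Real.sqrt (lam * V u))
          * (lam * (-2 * P u))))) u := (hΦd (Z u) (hZpos u hu)).comp u h2
    exact (h3.const_mul Tc).add (hasDerivAt_id u)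
  have hH'le : ∀ u ∈ Set.Ioo t₀ (t₀ + Tc),
      Tc * (g (Z u) * (bh * (1 / (2 * Real.sqrt (lam * V u))
        * (lam * (-2 * P u))))) + 1 ≤ 0 := by
    intro u hu
    have hu' : u ∈ Set.Icc t₀ (t₀ + Tc) := Set.Ioo_subset_Icc_self hu
    have hVu : 0 < V u := hVpos u hu'
    have hsq : 0 < Real.sqrt (lam * V u) := Real.sqrt_pos.mpr (mul_pos hlam hVu)
    have hWh : 0 < Ωhat (Z u) := hhatpos _ (hZpos u hu')
    have hV' := hkey u hu' hVu
    have hgZ : g (Z u) = bh * Real.sqrt (lam * V u) / Ωhat (Z u) := by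
      rw [hg_def, hZ_def]
    rw [hgZ]
    have key : (bh * Real.sqrt (lam * V u) / Ωhat (Z u)) * (bh * (1 / (2 * Real.sqrt (lam * V u)) * (lam * (-2 * P u))))
        = bh^2 * lam * (-2 * P u) / (2 * Ωhat (Z u)) := by
      field_simp
    rw [key]
    have hV2 : -2 * P u ≤ -(2 * (1 / (lam * bh ^ 2 * Tc)) * Ωhat (Z u)) := hV'
    have h4 : Tc * (bh^2 * lam * (-2 * P u)) ≤ -(2 * Ωhat (Z u)) := by
      have hpos : (0:ℝ) < lam * bh^2 * Tc := by positivity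
      have h1 := mul_le_mul_of_nonneg_left hV2 (le_of_lt hpos)
      have heq : lam * bh^2 * Tc * (-(2 * (1 / (lam * bh^2 * Tc)) * Ωhat (Z u)))
          = -(2 * Ωhat (Z u)) := by
        field_simp
      nlinarith [h1, heq]
    have h5 : Tc * (bh^2 * lam * (-2 * P u) / (2 * Ωhat (Z u)))
        = Tc * (bh^2 * lam * (-2 * P u)) / (2 * Ωhat (Z u)) := by ring
    rw [h5]
    have h2Wh : (0:ℝ) < 2 * Ωhat (Z u) := by positivity
    have h6 := (div_le_div_iff_of_pos_right h2Wh).mpr h4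
    have h7 : (-(2 * Ωhat (Z u))) / (2 * Ωhat (Z u)) = -1 := by field_simp
    rw [h7] at h6
    linarith
  have hHanti : AntitoneOn H (Set.Icc t₀ (t₀ + Tc)) := stmt13_antitoneOn hHd hH'le
  have hfin := hHanti (Set.left_mem_Icc.mpr hTle) (Set.right_mem_Icc.mpr hTle) hTle
  have hZT0nn : 0 ≤ Z (t₀ + Tc) := (hZpos _ (Set.right_mem_Icc.mpr hTle)).le
  have hZt₀nn : 0 ≤ Z t₀ := (hZpos _ (Set.left_mem_Icc.mpr hTle)).le
  have hA := hΦnn (Z (t₀ + Tc)) hZT0nn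
  have hB := hΦlt1 (Z t₀) hZt₀nn
  rw [hH_def] at hfin
  simp only [] at hfin
  nlinarith [hfin, hA, hB, hTc]


private lemma stmt13_dot_DDT {n m : ℕ} (D : Matrix (Fin n) (Fin m) ℝ) (w : Fin n → ℝ) :
    w ⬝ᵥ (D * Dᵀ).mulVec w = ∑ e, (Dᵀ.mulVec w e) ^ 2 := by
  rw [← Matrix.mulVec_mulVec, Matrix.dotProduct_mulVec, ← Matrix.mulVec_transpose]
  simp [dotProduct, sq]

private lemma stmt13_dot_rearrange {n m : ℕ} (D : Matrix (Fin n) (Fin m) ℝ)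
    (δ : Fin n → ℝ) (w : Fin m → ℝ) :
    ∑ i, 2 * δ i * (-(D.mulVec w)) i = -2 * ∑ e, (Dᵀ.mulVec δ) e * w e := by
  have h1 : ∑ e, (Dᵀ.mulVec δ) e * w e = (Dᵀ.mulVec δ) ⬝ᵥ w := rfl
  have h2 : δ ⬝ᵥ (D.mulVec w) = (Dᵀ.mulVec δ) ⬝ᵥ w := by
    rw [Matrix.dotProduct_mulVec, ← Matrix.mulVec_transpose]
  have h3 : ∑ i, 2 * δ i * (-(D.mulVec w)) i = -2 * (δ ⬝ᵥ D.mulVec w) := by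
    simp only [dotProduct, Pi.neg_apply, Finset.mul_sum, ← Finset.sum_neg_distrib]
    apply Finset.sum_congr rfl
    intro i _
    ring
  rw [h3, h2, h1]

private lemma stmt13_mulVec_sub_const {n m : ℕ} (D : Matrix (Fin n) (Fin m) ℝ)
    (hD : ∀ j, (∑ i, D i j) = 0) (w : Fin n → ℝ) (c : ℝ) (e : Fin m) :
    Dᵀ.mulVec (fun i => w i - c) e = Dᵀ.mulVec w e := by
  have h1 : Dᵀ.mulVec (fun i => w i - c) e
      = (∑ i, D i e * w i) - (∑ i, D i e) * c := by
    simp [Matrix.mulVec, dotProduct, Matrix.transpose_apply, mul_sub,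
      Finset.sum_sub_distrib, Finset.sum_mul]
  rw [h1, hD e]
  simp [Matrix.mulVec, dotProduct, Matrix.transpose_apply]

private lemma stmt13_caseB (t₀ C : ℝ) (V P : ℝ → ℝ) (hC : 0 < C)
    (hVnn : ∀ u, 0 ≤ V u)
    (hVd : ∀ u, t₀ ≤ u → HasDerivAt V (-2 * P u) u)
    (hPlow : ∀ u, t₀ ≤ u → 0 < V u → C / 2 ≤ P u) :
    V t₀ = 0 := by
  by_contra hne
  have hV0pos : 0 < V t₀ := lt_of_le_of_ne (hVnn _) (Ne.symm hne)
  set T' : ℝ := t₀ + V t₀ / C with hT'_def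
  have hT'ge : t₀ ≤ T' := by
    rw [hT'_def]
    have : 0 ≤ V t₀ / C := div_nonneg (hVnn _) hC.le
    linarith
  have hzero : ∃ u ∈ Set.Icc t₀ T', V u = 0 := by
    by_contra hno
    push_neg at hno
    have hposall : ∀ u ∈ Set.Icc t₀ T', 0 < V u :=
      fun u hu => lt_of_le_of_ne (hVnn _) (Ne.symm (hno u hu))
    have hH₂anti : AntitoneOn (fun u => V u + C * u) (Set.Icc t₀ T') := by
      apply stmt13_antitoneOn (f' := fun u => -2 * P u + C)
      · intro u hu
        have hlin : HasDerivAt (fun r : ℝ => C * r) C u := by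
          simpa using (hasDerivAt_id u).const_mul C
        exact (hVd u hu.1).add hlin
      · intro u hu
        have h1 := hPlow u hu.1.le (hposall u (Set.Ioo_subset_Icc_self hu))
        linarith
    have h1 := hH₂anti (Set.left_mem_Icc.mpr hT'ge) (Set.right_mem_Icc.mpr hT'ge) hT'ge
    simp only [] at h1
    have h2 : V T' ≤ V t₀ - C * (T' - t₀) := by linarith
    rw [hT'_def] at h2
    have h3 : C * (t₀ + V t₀ / C - t₀) = V t₀ := by
      field_simp
      ring
    rw [h3] at h2
    have h4 := hposall T' (Set.right_mem_Icc.mpr hT'ge)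
    rw [hT'_def] at h4
    linarith
  set S : Set ℝ := {u | u ∈ Set.Icc t₀ T' ∧ V u = 0} with hS_def
  have hSne : S.Nonempty := by
    obtain ⟨u, hu1, hu2⟩ := hzero
    exact ⟨u, hu1, hu2⟩
  have hSbb : BddBelow S := ⟨t₀, fun u hu => hu.1.1⟩
  have hScl : IsClosed S := by
    have hVc : ContinuousOn V (Set.Icc t₀ T') :=
      fun u hu => (hVd u hu.1).continuousAt.continuousWithinAt
    have : S = Set.Icc t₀ T' ∩ V ⁻¹' {0} := by
      ext u; simp [hS_def, Set.mem_inter_iff]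
    rw [this]
    exact hVc.preimage_isClosed_of_isClosed isClosed_Icc isClosed_singleton
  set t₁ : ℝ := sInf S with ht₁_def
  have ht₁S : t₁ ∈ S := hScl.csInf_mem hSne hSbb
  have ht₁0 : V t₁ = 0 := ht₁S.2
  have ht₁mem : t₁ ∈ Set.Icc t₀ T' := ht₁S.1
  have ht₀t₁ : t₀ < t₁ := by
    rcases lt_or_eq_of_le ht₁mem.1 with h | h
    · exact h
    · exfalso
      rw [← h] at ht₁0
      exact hne ht₁0
  have hVpos2 : ∀ u ∈ Set.Ico t₀ t₁, 0 < V u := by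
    intro u hu
    have hnotS : u ∉ S := by
      intro huS
      exact absurd (csInf_le hSbb huS) (not_le.mpr hu.2)
    apply lt_of_le_of_ne (hVnn u)
    intro heq
    apply hnotS
    exact ⟨⟨hu.1, le_trans hu.2.le ht₁mem.2⟩, heq.symm⟩
  have hlow : ∀ u ∈ Set.Ico t₀ t₁, C * (t₁ - u) ≤ V u := by
    intro u hu
    have hH₂anti : AntitoneOn (fun r => V r + C * r) (Set.Icc u t₁) := by
      apply stmt13_antitoneOn (f' := fun r => -2 * P r + C)
      · intro r hr
        have hlin : HasDerivAt (fun p : ℝ => C * p) C r := by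
          simpa using (hasDerivAt_id r).const_mul C
        exact (hVd r (hu.1.trans hr.1)).add hlin
      · intro r hr
        have hrV : 0 < V r := hVpos2 r ⟨hu.1.trans hr.1.le, hr.2⟩
        have h1 := hPlow r (hu.1.trans hr.1.le) hrV
        linarith
    have h1 := hH₂anti (Set.left_mem_Icc.mpr hu.2.le) (Set.right_mem_Icc.mpr hu.2.le) hu.2.le
    simp only [] at h1
    rw [ht₁0] at h1
    linarith
  have hVd₁ : HasDerivAt V (-2 * P t₁) t₁ := hVd t₁ ht₁mem.1
  have hmin : IsLocalMin V t₁ := by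
    apply Filter.Eventually.of_forall
    intro u
    rw [ht₁0]
    exact hVnn u
  have hW0 : -2 * P t₁ = 0 := hmin.hasDerivAt_eq_zero hVd₁
  have hVd₁' : HasDerivAt V 0 t₁ := by rw [hW0] at hVd₁; exact hVd₁
  have hslope := hasDerivAt_iff_tendsto_slope.mp hVd₁'
  have hleft : Filter.Tendsto (slope V t₁) (nhdsWithin t₁ (Set.Iio t₁)) (nhds 0) := by
    apply hslope.mono_left
    apply nhdsWithin_mono
    intro u hu
    exact ne_of_lt hu
  have hev : ∀ᶠ u in nhdsWithin t₁ (Set.Iio t₁), slope V t₁ u ≤ -C := by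
    filter_upwards [Ioo_mem_nhdsLT_of_mem (show t₁ ∈ Set.Ioc t₀ t₁ from ⟨ht₀t₁, le_rfl⟩)]
      with u hu
    have h1 := hlow u ⟨hu.1.le, hu.2⟩
    have h2 : u - t₁ < 0 := by linarith [hu.2]
    rw [slope_def_field, div_le_iff_of_neg h2, ht₁0]
    nlinarith [h1]
  have hfin := le_of_tendsto hleft hev
  linarith

/-- predefined-time part of Theorem 2: with gains
κ⁽ˡ⁾ₑ ≥ β(m̲)^d/(λβ(m̄)²T_c), protocol (i) on a switched dynamic network reaches
consensus on the average of the initial conditions within the predefined time T_c. -/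
theorem stmt13 {ι : Type} [Fintype ι] [Nonempty ι] {n : ℕ} (hn : 1 ≤ n)
    (m : ι → ℕ) (D : (l : ι) → Matrix (Fin n) (Fin (m l)) ℝ)
    (hD : ∀ l, ∀ j, (∑ i, D l i j) = 0)
    (lam : ℝ) (hlam : 0 < lam)
    (hRay : ∀ l, ∀ δ : Fin n → ℝ, (∑ i, δ i) = 0 →
      lam * (∑ i, δ i ^ 2) ≤ δ ⬝ᵥ ((D l * (D l)ᵀ).mulVec δ))
    (mlow mhigh : ℕ)
    (hmlow : IsLeast (Set.range m) mlow) (hmhigh : IsGreatest (Set.range m) mhigh)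
    (Ω Ωhat : ℝ → ℝ) (β : ℕ → ℝ) (d : ℝ)
    (hΩ : IsPredefinedTimeConsensusFunction Ω Ωhat β d)
    (Tc : ℝ) (hTc : 0 < Tc)
    (κ : (l : ι) → Fin (m l) → ℝ)
    (hκ : ∀ l e, β mlow ^ d / (lam * β mhigh ^ 2 * Tc) ≤ κ l e)
    (F : (l : ι) → (Fin (m l) → ℝ) → (Fin (m l) → ℝ))
    (hF : ∀ l v e, F l v e = if v e = 0 then 0 else κ l e * Ω |v e| / v e)
    (σ : ℝ → ι) (t₀ : ℝ) (x : ℝ → Fin n → ℝ)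
    (hx : ∀ t, t₀ ≤ t →
      HasDerivAt x (-(D (σ t)).mulVec (F (σ t) ((D (σ t))ᵀ.mulVec (x t)))) t) :
    ∀ t, t₀ + Tc ≤ t →
      ∀ i, x t i = (1 / (n : ℝ)) * ∑ j, x t₀ j := by
  obtain ⟨hΩmono, hΩnn, hhatmono, hhatpos, hhatcont, hβanti, hβpos, hd1, hineq, hint⟩ := hΩ
  intro t ht i
  have hd0 : (0:ℝ) ≤ d := le_trans zero_le_one hd1
  have hbhpos : 0 < β mhigh := hβpos mhigh
  have hblpos : 0 < β mlow := hβpos mlow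
  have hbldpos : 0 < β mlow ^ d := Real.rpow_pos_of_pos hblpos d
  have hκ0pos : 0 < β mlow ^ d / (lam * β mhigh ^ 2 * Tc) := by positivity
  have hκpos : ∀ l e, 0 < κ l e := fun l e => lt_of_lt_of_le hκ0pos (hκ l e)
  have hnpos : (0:ℝ) < (n:ℝ) := by exact_mod_cast hn
  set c : ℝ := (1 / (n:ℝ)) * ∑ j, x t₀ j with hc_def
  -- coordinate derivatives
  have hxi : ∀ u, t₀ ≤ u → ∀ k : Fin n,
      HasDerivAt (fun r => x r k)
        ((-(D (σ u)).mulVec (F (σ u) ((D (σ u))ᵀ.mulVec (x u)))) k) u := by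
    intro u hu k
    have h := ((ContinuousLinearMap.proj (R := ℝ) (φ := fun _ : Fin n => ℝ)
      k).hasFDerivAt).comp_hasDerivAt u (hx u hu)
    exact h
  -- the sum of coordinates is constant
  have hsd : ∀ u, t₀ ≤ u → HasDerivAt (fun r => ∑ j, x r j) 0 u := by
    intro u hu
    have h1 : HasDerivAt (fun r => ∑ j, x r j)
        (∑ j, (-(D (σ u)).mulVec (F (σ u) ((D (σ u))ᵀ.mulVec (x u)))) j) u :=
      HasDerivAt.fun_sum (fun j _ => hxi u hu j)
    have h2 : (∑ j, (-(D (σ u)).mulVec (F (σ u) ((D (σ u))ᵀ.mulVec (x u)))) j) = 0 := by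
      calc ∑ j, (-(D (σ u)).mulVec (F (σ u) ((D (σ u))ᵀ.mulVec (x u)))) j
          = -∑ j, ∑ e, D (σ u) j e * (F (σ u) ((D (σ u))ᵀ.mulVec (x u))) e := by
            simp [Matrix.mulVec, dotProduct]
        _ = -∑ e, (∑ j, D (σ u) j e) * (F (σ u) ((D (σ u))ᵀ.mulVec (x u))) e := by
            rw [Finset.sum_comm]
            simp [Finset.sum_mul]
        _ = 0 := by simp [hD (σ u)]
    rw [h2] at h1
    exact h1
  have hsum : ∀ u, t₀ ≤ u → (∑ j, x u j) = ∑ j, x t₀ j := by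
    intro u hu
    have ha : AntitoneOn (fun r => ∑ j, x r j) (Set.Icc t₀ u) := by
      apply stmt13_antitoneOn (f' := fun _ => (0:ℝ))
      · exact fun r hr => hsd r hr.1
      · exact fun r _ => le_refl 0
    have hb : AntitoneOn (fun r => -∑ j, x r j) (Set.Icc t₀ u) := by
      apply stmt13_antitoneOn (f' := fun _ => (0:ℝ))
      · intro r hr
        have := (hsd r hr.1).fun_neg
        simpa using this
      · exact fun r _ => le_refl 0
    have h1 := ha (Set.left_mem_Icc.mpr hu) (Set.right_mem_Icc.mpr hu) hu
    have h2 := hb (Set.left_mem_Icc.mpr hu) (Set.right_mem_Icc.mpr hu) hu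
    simp only at h1 h2
    linarith
  -- deviation sums to zero
  have hδ0 : ∀ u, t₀ ≤ u → (∑ j, (x u j - c)) = 0 := by
    intro u hu
    have h1 : ∑ j : Fin n, (x u j - c) = (∑ j, x u j) - (n:ℝ) * c := by
      rw [Finset.sum_sub_distrib]
      simp [Finset.card_univ, mul_comm]
    rw [h1, hsum u hu, hc_def]
    field_simp
    ring
  -- Lyapunov function
  set V : ℝ → ℝ := fun u => ∑ j, (x u j - c)^2 with hV_def
  have hVnn : ∀ u, 0 ≤ V u := fun u => Finset.sum_nonneg (fun j _ => sq_nonneg _)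
  set P : ℝ → ℝ := fun u => ∑ e, ((D (σ u))ᵀ.mulVec (x u)) e
    * F (σ u) ((D (σ u))ᵀ.mulVec (x u)) e with hP_def
  -- derivative of V
  have hVd : ∀ u, t₀ ≤ u → HasDerivAt V (-2 * P u) u := by
    intro u hu
    have h1 : HasDerivAt V
        (∑ j, 2 * (x u j - c) * ((-(D (σ u)).mulVec (F (σ u) ((D (σ u))ᵀ.mulVec (x u)))) j)) u := by
      have h2 : HasDerivAt V (∑ j, (2 * (x u j - c)^(2-1) *
          ((-(D (σ u)).mulVec (F (σ u) ((D (σ u))ᵀ.mulVec (x u)))) j))) u := by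
        apply HasDerivAt.fun_sum
        intro j _
        exact ((hxi u hu j).sub_const c).pow 2
      simpa using h2
    have h3 := stmt13_dot_rearrange (D (σ u)) (fun j => x u j - c)
      (F (σ u) ((D (σ u))ᵀ.mulVec (x u)))
    rw [h3] at h1
    have h4 : (∑ e, ((D (σ u))ᵀ.mulVec (fun j => x u j - c)) e
        * F (σ u) ((D (σ u))ᵀ.mulVec (x u)) e) = P u := by
      apply Finset.sum_congr rfl
      intro e _
      rw [stmt13_mulVec_sub_const (D (σ u)) (hD (σ u)) (x u) c e]
    rw [h4] at h1
    exact h1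
  -- each term of P is nonnegative, with an explicit formula
  have hterm : ∀ u (e : Fin (m (σ u))),
      ((D (σ u))ᵀ.mulVec (x u)) e * F (σ u) ((D (σ u))ᵀ.mulVec (x u)) e
      = if ((D (σ u))ᵀ.mulVec (x u)) e = 0 then 0
        else κ (σ u) e * Ω |((D (σ u))ᵀ.mulVec (x u)) e| := by
    intro u e
    rw [hF]
    split_ifs with h
    · simp
    · rw [mul_comm, div_mul_cancel₀]
      exact h
  have hPterm : ∀ u (e : Fin (m (σ u))),
      0 ≤ ((D (σ u))ᵀ.mulVec (x u)) e * F (σ u) ((D (σ u))ᵀ.mulVec (x u)) e := by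
    intro u e
    rw [hterm u e]
    split_ifs with h
    · exact le_refl 0
    · exact mul_nonneg (hκpos _ _).le (hΩnn _ (abs_nonneg _))
  have hPnn : ∀ u, 0 ≤ P u := fun u => Finset.sum_nonneg (fun e _ => hPterm u e)
  -- V is antitone
  have hVanti : ∀ a b : ℝ, t₀ ≤ a → AntitoneOn V (Set.Icc a b) := by
    intro a b hab
    apply stmt13_antitoneOn (f' := fun u => -2 * P u)
    · exact fun u hu => hVd u (hab.trans hu.1)
    · intro u _
      nlinarith [hPnn u]
  -- Rayleigh bound
  have hlamV : ∀ u, t₀ ≤ u →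
      lam * V u ≤ ∑ e, (((D (σ u))ᵀ.mulVec (x u)) e)^2 := by
    intro u hu
    have h := hRay (σ u) (fun j => x u j - c) (hδ0 u hu)
    rw [stmt13_dot_DDT] at h
    have h2 : (∑ e, (((D (σ u))ᵀ.mulVec (fun j => x u j - c)) e)^2)
        = ∑ e, (((D (σ u))ᵀ.mulVec (x u)) e)^2 := by
      apply Finset.sum_congr rfl
      intro e _
      rw [stmt13_mulVec_sub_const (D (σ u)) (hD (σ u)) (x u) c e]
    rw [h2] at h
    exact h
  -- final extraction
  suffices hVt : V t = 0 by
    have hnn2 : ∀ j ∈ Finset.univ, (0:ℝ) ≤ (x t j - c)^2 := fun j _ => sq_nonneg _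
    have h1 := (Finset.sum_eq_zero_iff_of_nonneg hnn2).mp hVt i (Finset.mem_univ i)
    have h2 : x t i - c = 0 := by
      have := pow_eq_zero_iff (n := 2) (by norm_num) |>.mp h1
      exact this
    linarith
  have htt₀ : t₀ ≤ t := by linarith
  by_cases h0 : ∀ a : ℝ, 0 < a → ∃ u : ℝ, 0 < u ∧ Ω u < a
  · -- CASE A
    have hΩ0 : Ω 0 = 0 := by
      apply le_antisymm _ (hΩnn 0 le_rfl)
      by_contra hc0
      push_neg at hc0
      obtain ⟨u, hu, hu2⟩ := h0 (Ω 0) hc0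
      exact absurd (hΩmono hu.le) (not_le.mpr hu2)
    have hkey : ∀ u ∈ Set.Icc t₀ (t₀ + Tc), 0 < V u →
        -2 * P u ≤ -(2 * (1 / (lam * β mhigh ^ 2 * Tc))
          * Ωhat (β mhigh * Real.sqrt (lam * V u))) := by
      intro u hu hVu
      have hml : 1 ≤ m (σ u) := by
        by_contra hml
        push_neg at hml
        have hml0 : m (σ u) = 0 := Nat.lt_one_iff.mp hml
        have hie : IsEmpty (Fin (m (σ u))) := by rw [hml0]; infer_instance
        have h0sum : (∑ e, (((D (σ u))ᵀ.mulVec (x u)) e)^2) = 0 := by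
          haveI := hie
          simp
        have := hlamV u hu.1
        rw [h0sum] at this
        nlinarith
      have happ := hineq (m (σ u)) hml (fun e => |((D (σ u))ᵀ.mulVec (x u)) e|)
        (fun e => abs_nonneg _)
      have habs : (∑ e, |((D (σ u))ᵀ.mulVec (x u)) e| ^ 2)
          = ∑ e, (((D (σ u))ᵀ.mulVec (x u)) e)^2 := by
        apply Finset.sum_congr rfl
        intro e _
        rw [sq_abs]
      rw [habs] at happ
      have hβm : β mhigh ≤ β (m (σ u)) := hβanti (hmhigh.2 ⟨σ u, rfl⟩)
      have hsq : Real.sqrt (lam * V u) ≤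
          Real.sqrt (∑ e, (((D (σ u))ᵀ.mulVec (x u)) e)^2) :=
        Real.sqrt_le_sqrt (hlamV u hu.1)
      have harg : β mhigh * Real.sqrt (lam * V u)
          ≤ β (m (σ u)) * Real.sqrt (∑ e, (((D (σ u))ᵀ.mulVec (x u)) e)^2) :=
        mul_le_mul hβm hsq (Real.sqrt_nonneg _) (hβpos _).le
      have hZnn : 0 ≤ β mhigh * Real.sqrt (lam * V u) :=
        mul_nonneg hbhpos.le (Real.sqrt_nonneg _)
      have hmono := hhatmono (Set.mem_Ici.mpr hZnn)
        (Set.mem_Ici.mpr (mul_nonneg (hβpos _).le (Real.sqrt_nonneg _))) harg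
      have hβd : β (m (σ u)) ^ d ≤ β mlow ^ d :=
        Real.rpow_le_rpow (hβpos _).le (hβanti (hmlow.2 ⟨σ u, rfl⟩)) hd0
      have hSnn : 0 ≤ ∑ e, Ω |((D (σ u))ᵀ.mulVec (x u)) e| :=
        Finset.sum_nonneg (fun e _ => hΩnn _ (abs_nonneg _))
      have hchain : Ωhat (β mhigh * Real.sqrt (lam * V u))
          ≤ β mlow ^ d * ∑ e, Ω |((D (σ u))ᵀ.mulVec (x u)) e| :=
        le_trans (le_trans hmono happ) (mul_le_mul_of_nonneg_right hβd hSnn)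
      have hPge : (β mlow ^ d / (lam * β mhigh ^ 2 * Tc))
          * (∑ e, Ω |((D (σ u))ᵀ.mulVec (x u)) e|) ≤ P u := by
        rw [hP_def]
        simp only []
        rw [Finset.mul_sum]
        apply Finset.sum_le_sum
        intro e _
        rw [hterm u e]
        split_ifs with h
        · rw [h]
          simp only [abs_zero, hΩ0, mul_zero]
          exact le_refl 0
        · exact mul_le_mul_of_nonneg_right (hκ (σ u) e) (hΩnn _ (abs_nonneg _))
      have hc₁ : (1 / (lam * β mhigh ^ 2 * Tc)) * Ωhat (β mhigh * Real.sqrt (lam * V u))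
          ≤ P u := by
        calc (1 / (lam * β mhigh ^ 2 * Tc)) * Ωhat (β mhigh * Real.sqrt (lam * V u))
            ≤ (1 / (lam * β mhigh ^ 2 * Tc))
              * (β mlow ^ d * ∑ e, Ω |((D (σ u))ᵀ.mulVec (x u)) e|) := by
              apply mul_le_mul_of_nonneg_left hchain
              positivity
          _ = (β mlow ^ d / (lam * β mhigh ^ 2 * Tc))
              * (∑ e, Ω |((D (σ u))ᵀ.mulVec (x u)) e|) := by ring
          _ ≤ P u := hPge
      linarith
    have hVT := stmt13_caseA t₀ Tc lam (β mhigh) V P Ωhat hTc hlam hbhpos hhatpos hhatcont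
      hint hVnn (fun u hu => hVd u hu.1) (hVanti t₀ (t₀ + Tc) le_rfl) hkey
    have hanti := hVanti (t₀ + Tc) t (by linarith)
    have h1 := hanti (Set.left_mem_Icc.mpr ht) (Set.right_mem_Icc.mpr ht) ht
    rw [hVT] at h1
    linarith [hVnn t]
  · -- CASE B
    push_neg at h0
    obtain ⟨a, hapos, ha⟩ := h0
    have hPlow : ∀ u, t₀ ≤ u → 0 < V u →
        (2 * (β mlow ^ d / (lam * β mhigh ^ 2 * Tc)) * a) / 2 ≤ P u := by
      intro u hu hVu
      have hvpos : 0 < ∑ e, (((D (σ u))ᵀ.mulVec (x u)) e)^2 :=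
        lt_of_lt_of_le (mul_pos hlam hVu) (hlamV u hu)
      have hex : ∃ e, ((D (σ u))ᵀ.mulVec (x u)) e ≠ 0 := by
        by_contra hall
        push_neg at hall
        have hz : (∑ e, (((D (σ u))ᵀ.mulVec (x u)) e)^2) = 0 := by
          apply Finset.sum_eq_zero
          intro e _
          rw [hall e]
          ring
        rw [hz] at hvpos
        exact lt_irrefl 0 hvpos
      obtain ⟨e, he⟩ := hex
      have hsingle : ((D (σ u))ᵀ.mulVec (x u)) e
          * F (σ u) ((D (σ u))ᵀ.mulVec (x u)) e ≤ P u :=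
        Finset.single_le_sum (fun e' _ => hPterm u e') (Finset.mem_univ e)
      have hval : (2 * (β mlow ^ d / (lam * β mhigh ^ 2 * Tc)) * a) / 2
          ≤ ((D (σ u))ᵀ.mulVec (x u)) e * F (σ u) ((D (σ u))ᵀ.mulVec (x u)) e := by
        rw [hterm u e, if_neg he]
        have habs : 0 < |((D (σ u))ᵀ.mulVec (x u)) e| := abs_pos.mpr he
        have hΩa : a ≤ Ω |((D (σ u))ᵀ.mulVec (x u)) e| := ha _ habs
        have heq2 : (2 * (β mlow ^ d / (lam * β mhigh ^ 2 * Tc)) * a) / 2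
            = (β mlow ^ d / (lam * β mhigh ^ 2 * Tc)) * a := by ring
        rw [heq2]
        exact mul_le_mul (hκ (σ u) e) hΩa hapos.le (hκpos _ _).le
      linarith
    have hVt₀ := stmt13_caseB t₀ (2 * (β mlow ^ d / (lam * β mhigh ^ 2 * Tc)) * a) V P
      (by positivity) hVnn hVd hPlow
    have hanti := hVanti t₀ t le_rfl
    have h1 := hanti (Set.left_mem_Icc.mpr htt₀) (Set.right_mem_Icc.mpr htt₀) htt₀
    rw [hVt₀] at h1
    linarith [hVnn t]
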